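/- arXiv:1307.3143 — 2 statements merged into one kernel-verified Lean document; each statement's English description precedes it below -/
import Mathlib

section
/- If q : E → B is a quasifibration with contractible total space E, with B path-connected and based at b, then the connecting map of the quasifibration gives a weak homotopy equivalence F → ΩB from the fiber F = q⁻¹(b) to the loop space of B; that is, π_n(F) ≅ π_{n+1}(B) for all n ≥ 0. -/
open unitInterval

/-- The `n`-cube `I^n`. -/
abbrev Cb (n : ℕ) : Type := Fin n → unitInterval

/-- The boundary `∂I^n` of the `n`-cube. -/
def cbBoundary (n : ℕ) : Set (Cb n) := {t | ∃ i, t i = 0 ∨ t i = 1}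

/-- Based maps `(I^n, ∂I^n) → (X, x)`. -/
abbrev BasedLoop (n : ℕ) (X : Type*) [TopologicalSpace X] (x : X) : Type _ :=
  {f : C(Cb n, X) // ∀ t ∈ cbBoundary n, f t = x}

/-- Based homotopy of based maps from the `n`-cube. -/
def BasedHtpy {n : ℕ} {X : Type*} [TopologicalSpace X] {x : X}
    (f g : BasedLoop n X x) : Prop :=
  ∃ H : C(Cb n × unitInterval, X),
    (∀ t, H (t, 0) = f.1 t) ∧ (∀ t, H (t, 1) = g.1 t) ∧
      ∀ s : unitInterval, ∀ t ∈ cbBoundary n, H (t, s) = x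

/-- The `n`-th homotopy group (as a set) of a pointed space. -/
def PiGrp (n : ℕ) (X : Type*) [TopologicalSpace X] (x : X) : Type _ :=
  Quot (@BasedHtpy n X _ x)

/-- The induced map on homotopy groups of a based continuous map. -/
def piMap {X Y : Type*} [TopologicalSpace X] [TopologicalSpace Y] (f : C(X, Y))
    {x : X} {y : Y} (hf : f x = y) (n : ℕ) : PiGrp n X x → PiGrp n Y y :=
  Quot.lift
    (fun p => Quot.mk _ ⟨f.comp p.1, fun t ht => by
      rw [ContinuousMap.comp_apply, p.2 t ht, hf]⟩)
    (fun a b h => by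
      obtain ⟨H, h0, h1, hb⟩ := h
      exact Quot.sound ⟨f.comp H,
        fun t => by simp [h0 t],
        fun t => by simp [h1 t],
        fun s t ht => by simp [hb s t ht, hf]⟩)

/-- A continuous map is a weak homotopy equivalence if it is surjective on path
components and induces bijections on all homotopy groups at all basepoints
(the case `n = 0` giving injectivity on path components). -/
def IsWeakHomotopyEquiv {X Y : Type*} [TopologicalSpace X] [TopologicalSpace Y]
    (f : C(X, Y)) : Prop :=
  (∀ y : Y, ∃ x : X, Joined (f x) y) ∧
    ∀ (x : X) (n : ℕ), Function.Bijective (@piMap X Y _ _ f x (f x) rfl n)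

/-- A Hurewicz fibration: a continuous map with the homotopy lifting property
with respect to all topological spaces. -/
def IsHurewiczFibration {E B : Type*} [TopologicalSpace E] [TopologicalSpace B]
    (p : E → B) : Prop :=
  Continuous p ∧
    ∀ (Z : Type) [TopologicalSpace Z] (g : Z → E) (Ht : Z × unitInterval → B),
      Continuous g → Continuous Ht → (∀ z, Ht (z, 0) = p (g z)) →
      ∃ Gt : Z × unitInterval → E, Continuous Gt ∧ (∀ z, Gt (z, 0) = g z) ∧
        ∀ w, p (Gt w) = Ht w

/-- The subset `J^{n-1} ⊂ ∂I^n`: all faces except the interior of the face `t_n = 0`. -/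
def Jset (n : ℕ) : Set (Cb n) :=
  {t | (∃ i : Fin n, (i : ℕ) + 1 < n ∧ (t i = 0 ∨ t i = 1)) ∨
    ∃ i : Fin n, (i : ℕ) + 1 = n ∧ t i = 1}

/-- Relative maps `(I^n, ∂I^n, J^{n-1}) → (X, A, x)`. -/
abbrev RelLoop (n : ℕ) (X : Type*) [TopologicalSpace X] (A : Set X) (x : X) : Type _ :=
  {f : C(Cb n, X) // (∀ t ∈ cbBoundary n, f t ∈ A) ∧ ∀ t ∈ Jset n, f t = x}

/-- Homotopy of maps of triples `(I^n, ∂I^n, J^{n-1}) → (X, A, x)`. -/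
def RelHtpy {n : ℕ} {X : Type*} [TopologicalSpace X] {A : Set X} {x : X}
    (f g : RelLoop n X A x) : Prop :=
  ∃ H : C(Cb n × unitInterval, X),
    (∀ t, H (t, 0) = f.1 t) ∧ (∀ t, H (t, 1) = g.1 t) ∧
      ∀ s : unitInterval, (∀ t ∈ cbBoundary n, H (t, s) ∈ A) ∧ ∀ t ∈ Jset n, H (t, s) = x

/-- The `n`-th relative homotopy set `π_n(X, A, x)`. -/
def RelPi (n : ℕ) (X : Type*) [TopologicalSpace X] (A : Set X) (x : X) : Type _ :=
  Quot (@RelHtpy n X _ A x)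

/-- The natural map `π_n(X, q⁻¹(y), x) → π_n(Y, y)` induced by `q`. -/
def qStar {X Y : Type*} [TopologicalSpace X] [TopologicalSpace Y] (q : C(X, Y))
    (y : Y) (x : X) (n : ℕ) : RelPi n X (q ⁻¹' {y}) x → PiGrp n Y y :=
  Quot.lift
    (fun p => Quot.mk _ ⟨q.comp p.1, fun t ht => by
      have := p.2.1 t ht
      simpa using this⟩)
    (fun a b h => by
      obtain ⟨H, h0, h1, hb⟩ := h
      exact Quot.sound ⟨q.comp H,
        fun t => by simp [h0 t],
        fun t => by simp [h1 t],
        fun s t ht => by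
          have := (hb s).1 t ht
          simpa using this⟩)

/-- `q` is a quasifibration: for all `y`, basepoints in the fiber, and `n ≥ 1`, the
natural map `π_n(X, q⁻¹(y), x₀) → π_n(Y, y)` is a bijection. -/
def IsQuasifibration {X Y : Type*} [TopologicalSpace X] [TopologicalSpace Y]
    (q : C(X, Y)) : Prop :=
  ∀ (y : Y) (x : X), q x = y → ∀ n : ℕ, 1 ≤ n → Function.Bijective (qStar q y x n)

namespace Stmt9Aux

/-- Pasting lemma for `ContinuousOn` on a union of two closed sets. -/
theorem pasteCO {α β : Type*} [TopologicalSpace α] [TopologicalSpace β] {f : α → β}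
    {s t : Set α} (hs : IsClosed s) (ht : IsClosed t)
    (hfs : ContinuousOn f s) (hft : ContinuousOn f t) : ContinuousOn f (s ∪ t) := by
  intro x hx
  have Hs : ContinuousWithinAt f s x := by
    by_cases h : x ∈ s
    · exact hfs x h
    · exact continuousWithinAt_of_notMem_closure (by rwa [hs.closure_eq])
  have Ht : ContinuousWithinAt f t x := by
    by_cases h : x ∈ t
    · exact hft x h
    · exact continuousWithinAt_of_notMem_closure (by rwa [ht.closure_eq])
  exact Hs.union Ht

theorem continuous_snoc {n : ℕ} :
    Continuous (fun p : Cb n × unitInterval => (Fin.snoc p.1 p.2 : Cb (n + 1))) := by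
  apply continuous_pi
  intro j
  induction j using Fin.lastCases with
  | last => simpa using continuous_snd
  | cast i => simpa using (show Continuous fun p : Cb n × unitInterval => p.1 i from
      (continuous_apply i).comp continuous_fst)

theorem continuous_init {n : ℕ} :
    Continuous (fun t : Cb (n + 1) => (Fin.init t : Cb n)) :=
  continuous_pi fun i => continuous_apply _

theorem isClosed_cbBoundary (n : ℕ) : IsClosed (cbBoundary n) := by
  have : cbBoundary n = ⋃ i, ({t : Cb n | t i = 0} ∪ {t : Cb n | t i = 1}) := by
    ext t; simp [cbBoundary]
  rw [this]
  exact isClosed_iUnion_of_finite fun i =>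
    ((isClosed_singleton.preimage (continuous_apply i)).union
      (isClosed_singleton.preimage (continuous_apply i)))

theorem isCompact_cbBoundary (n : ℕ) : IsCompact (cbBoundary n) :=
  (isClosed_cbBoundary n).isCompact

/-- The sup-distance of `t` from the center of the cube (scaled to `[0,1]`). -/
noncomputable def mcb {k : ℕ} (t : Cb (k + 1)) : ℝ :=
  Finset.univ.sup' ⟨0, Finset.mem_univ 0⟩ fun i => |2 * (t i : ℝ) - 1|

theorem continuous_mcb {k : ℕ} : Continuous (@mcb k) :=
  Continuous.finset_sup'_apply ⟨0, Finset.mem_univ 0⟩ fun i _ => by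
    fun_prop

theorem abs_le_mcb {k : ℕ} (t : Cb (k + 1)) (i : Fin (k + 1)) :
    |2 * (t i : ℝ) - 1| ≤ mcb t :=
  Finset.le_sup' (fun i => |2 * (t i : ℝ) - 1|) (Finset.mem_univ i)

theorem mcb_nonneg {k : ℕ} (t : Cb (k + 1)) : 0 ≤ mcb t :=
  le_trans (abs_nonneg _) (abs_le_mcb t 0)

theorem mcb_le_one {k : ℕ} (t : Cb (k + 1)) : mcb t ≤ 1 := by
  apply Finset.sup'_le
  intro i _
  have h1 := (t i).2.1
  have h2 := (t i).2.2
  rw [abs_le]; constructor <;> nlinarith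

theorem coe_eq_fact {x : unitInterval} : (x = 0 ∨ x = 1) ↔ |2 * (x : ℝ) - 1| = 1 := by
  have h1 := x.2.1
  have h2 := x.2.2
  constructor
  · rintro (rfl | rfl) <;> norm_num
  · intro h
    rcases abs_eq (by norm_num : (0:ℝ) ≤ 1) |>.mp h with h | h
    · right; apply Subtype.ext; dsimp; linarith
    · left; apply Subtype.ext; dsimp; linarith

theorem mem_cbBoundary_iff_mcb {k : ℕ} (t : Cb (k + 1)) :
    t ∈ cbBoundary (k + 1) ↔ mcb t = 1 := by
  constructor
  · rintro ⟨i, hi⟩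
    refine le_antisymm (mcb_le_one t) ?_
    calc (1:ℝ) = |2 * (t i : ℝ) - 1| := (coe_eq_fact.mp hi).symm
    _ ≤ mcb t := abs_le_mcb t i
  · intro h
    obtain ⟨i, _, hi⟩ := Finset.exists_mem_eq_sup' (⟨0, Finset.mem_univ 0⟩ :
      (Finset.univ : Finset (Fin (k+1))).Nonempty) fun i => |2 * (t i : ℝ) - 1|
    rw [mcb] at h
    rw [hi] at h
    exact ⟨i, coe_eq_fact.mpr h⟩

end Stmt9Aux

namespace Stmt9Aux

theorem isClosed_coord_face {n : ℕ} (i : Fin n) (c : unitInterval) :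
    IsClosed {t : Cb n | t i = c} :=
  isClosed_singleton.preimage (continuous_apply i)

theorem isClosed_Jset (n : ℕ) : IsClosed (Jset n) := by
  have : Jset n = ⋃ i : Fin n,
      {t : Cb n | ((i : ℕ) + 1 < n ∧ (t i = 0 ∨ t i = 1)) ∨ ((i : ℕ) + 1 = n ∧ t i = 1)} := by
    ext t
    simp only [Jset, Set.mem_setOf_eq, Set.mem_iUnion]
    rw [← exists_or]
  rw [this]
  apply isClosed_iUnion_of_finite
  intro i
  by_cases h2 : (i : ℕ) + 1 = n
  · have h1 : ¬((i : ℕ) + 1 < n) := by omega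
    simp only [h1, h2, lt_self_iff_false, false_and, true_and, false_or]
    exact isClosed_coord_face i 1
  · by_cases h1 : (i : ℕ) + 1 < n
    · simp only [h1, h2, true_and, false_and, or_false]
      rw [Set.setOf_or]
      exact (isClosed_coord_face i 0).union (isClosed_coord_face i 1)
    · simp only [h1, h2, false_and, or_self, Set.setOf_false]
      exact isClosed_empty

theorem Jset_subset_cbBoundary (n : ℕ) : Jset n ⊆ cbBoundary n := by
  rintro t (⟨i, _, hi⟩ | ⟨i, _, hi⟩)
  · exact ⟨i, hi⟩
  · exact ⟨i, Or.inr hi⟩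

/-- Radial projection of the cube minus its center onto its boundary. -/
noncomputable def projcb {k : ℕ} (t : Cb (k + 1)) : Cb (k + 1) := fun i =>
  Set.projIcc 0 1 zero_le_one (1 / 2 + ((t i : ℝ) - 1 / 2) / mcb t)

theorem projcb_eq_self {k : ℕ} {t : Cb (k + 1)} (h : mcb t = 1) : projcb t = t := by
  funext i
  rw [projcb, h, div_one]
  have : 1 / 2 + ((t i : ℝ) - 1 / 2) = (t i : ℝ) := by ring
  rw [this, Set.projIcc_val zero_le_one (t i)]

theorem projcb_mem_boundary {k : ℕ} {t : Cb (k + 1)} (h : mcb t ≠ 0) :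
    projcb t ∈ cbBoundary (k + 1) := by
  obtain ⟨i, _, hi⟩ := Finset.exists_mem_eq_sup' (⟨0, Finset.mem_univ 0⟩ :
    (Finset.univ : Finset (Fin (k+1))).Nonempty) fun i => |2 * (t i : ℝ) - 1|
  have hm : mcb t = |2 * (t i : ℝ) - 1| := hi
  have hpos : 0 < mcb t := lt_of_le_of_ne (mcb_nonneg t) (Ne.symm h)
  refine ⟨i, ?_⟩
  rcases (abs_eq (mcb_nonneg t)).mp hm.symm with h' | h'
  · right
    have heq : 1 / 2 + ((t i : ℝ) - 1 / 2) / mcb t = 1 := by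
      field_simp
      linarith
    simp only [projcb]
    rw [heq]
    apply Subtype.ext
    norm_num [Set.projIcc]
  · left
    have heq : 1 / 2 + ((t i : ℝ) - 1 / 2) / mcb t = 0 := by
      field_simp
      linarith
    simp only [projcb]
    rw [heq]
    apply Subtype.ext
    norm_num [Set.projIcc]

theorem continuousOn_projcb {k : ℕ} :
    ContinuousOn (@projcb k) {t | mcb t ≠ 0} := by
  rw [continuousOn_pi]
  intro i
  apply Continuous.comp_continuousOn continuous_projIcc
  apply ContinuousOn.add continuousOn_const
  apply ContinuousOn.div
  · fun_prop
  · exact continuous_mcb.continuousOn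
  · exact fun x hx => hx

end Stmt9Aux

namespace Stmt9Aux

/-- Any map defined and continuous on the boundary of a cube extends continuously
to the whole cube, provided the target is contractible (cone construction). -/
theorem coneExt {E : Type*} [TopologicalSpace E] [ContractibleSpace E] {k : ℕ}
    (D : Cb (k + 1) → E) (hD : ContinuousOn D (cbBoundary (k + 1))) :
    ∃ G : C(Cb (k + 1), E), ∀ t ∈ cbBoundary (k + 1), G t = D t := by
  obtain ⟨c, ⟨Hc⟩⟩ := id_nullhomotopic E
  have hmem : ∀ t : Cb (k+1), 1 - mcb t ∈ Set.Icc (0:ℝ) 1 := fun t =>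
    ⟨by linarith [mcb_le_one t], by linarith [mcb_nonneg t]⟩
  set G0 : Cb (k + 1) → E := fun t =>
    if mcb t = 0 then c
    else Hc (⟨1 - mcb t, hmem t⟩, D (projcb t)) with hG0
  have hmapsto : Set.MapsTo projcb {t : Cb (k+1) | mcb t ≠ 0} (cbBoundary (k + 1)) :=
    fun t ht => projcb_mem_boundary ht
  have hco : ContinuousOn G0 {t : Cb (k+1) | mcb t ≠ 0} := by
    apply ContinuousOn.congr
      (f := fun t : Cb (k+1) => Hc ((⟨1 - mcb t, hmem t⟩ : unitInterval), D (projcb t)))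
    · apply Hc.continuous.comp_continuousOn
      apply ContinuousOn.prodMk
      · exact ((continuous_const.sub continuous_mcb).subtype_mk _).continuousOn
      · exact (hD.comp continuousOn_projcb hmapsto)
    · intro t ht
      simp only [hG0, if_neg ht]
  have hopen : IsOpen {t : Cb (k+1) | mcb t ≠ 0} :=
    isOpen_compl_iff.mpr (isClosed_singleton.preimage continuous_mcb)
  -- the image of the boundary is compact
  have hKc : IsCompact (D '' cbBoundary (k + 1)) :=
    (isCompact_cbBoundary (k + 1)).image_of_continuousOn hD
  have hcont : Continuous G0 := by
    rw [continuous_iff_continuousAt]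
    intro w
    by_cases hw : mcb w = 0
    · -- continuity at the center, via the tube lemma
      have hval : G0 w = c := by simp [hG0, hw]
      rw [ContinuousAt, hval]
      intro U hU
      obtain ⟨V, hVU, hVo, hcV⟩ := mem_nhds_iff.mp hU
      have hsub : ({1} : Set unitInterval) ×ˢ (D '' cbBoundary (k + 1)) ⊆
          (fun p : unitInterval × E => Hc p) ⁻¹' V := by
        rintro ⟨s, e⟩ ⟨hs, ⟨u, _, rfl⟩⟩
        have hs1 : s = 1 := hs
        simp only [Set.mem_preimage, hs1, Hc.apply_one]
        exact hcV
      obtain ⟨v, u, hv, _, h1v, hKu, huv⟩ :=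
        generalized_tube_lemma isCompact_singleton hKc (hVo.preimage Hc.continuous) hsub
      obtain ⟨ε, hεpos, hball⟩ := Metric.isOpen_iff.mp hv 1 (h1v rfl)
      have hevset : IsOpen {t : Cb (k+1) | mcb t < ε} :=
        isOpen_Iio.preimage continuous_mcb
      have hwmem : w ∈ {t : Cb (k+1) | mcb t < ε} := by
        simp only [Set.mem_setOf_eq, hw]; exact hεpos
      rw [Filter.mem_map]
      filter_upwards [hevset.mem_nhds hwmem] with z hz
      show G0 z ∈ U
      apply hVU
      by_cases hz0 : mcb z = 0
      · simpa [hG0, hz0] using hcV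
      · have h1 : D (projcb z) ∈ u := hKu ⟨projcb z, projcb_mem_boundary hz0, rfl⟩
        have h2 : (⟨1 - mcb z, hmem z⟩ : unitInterval) ∈ v := by
          apply hball
          rw [Metric.mem_ball]
          have : dist (⟨1 - mcb z, hmem z⟩ : unitInterval) 1 = |1 - mcb z - 1| := by
            rw [Subtype.dist_eq]
            norm_num
          rw [this, abs_of_nonpos (by linarith [mcb_nonneg z])]
          simpa using hz
        have := huv (Set.mk_mem_prod h2 h1)
        simpa [hG0, if_neg hz0] using this
    · exact hco.continuousAt (hopen.mem_nhds hw)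
  refine ⟨⟨G0, hcont⟩, fun t ht => ?_⟩
  have h1 : mcb t = 1 := (mem_cbBoundary_iff_mcb t).mp ht
  have hne : mcb t ≠ 0 := by rw [h1]; norm_num
  simp only [ContinuousMap.coe_mk, hG0, if_neg hne]
  have : (⟨1 - mcb t, hmem t⟩ : unitInterval) = 0 := by
    apply Subtype.ext; simp [h1]
  rw [this, projcb_eq_self h1, Hc.apply_zero]
  rfl

end Stmt9Aux

namespace Stmt9Aux

theorem snoc_zero_mem_boundary {n : ℕ} (t : Cb n) :
    (Fin.snoc t 0 : Cb (n + 1)) ∈ cbBoundary (n + 1) :=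
  ⟨Fin.last n, Or.inl (by simp)⟩

theorem snoc_mem_Jset_of_boundary {n : ℕ} {t : Cb n} (ht : t ∈ cbBoundary n)
    (s : unitInterval) : (Fin.snoc t s : Cb (n + 1)) ∈ Jset (n + 1) := by
  obtain ⟨i, hi⟩ := ht
  exact Or.inl ⟨i.castSucc, by simpa using i.isLt, by simpa⟩

variable {n : ℕ} {X : Type*} [TopologicalSpace X] {x : X}

theorem basedHtpy_refl (f : BasedLoop n X x) : BasedHtpy f f :=
  ⟨f.1.comp ⟨Prod.fst, continuous_fst⟩, fun _ => rfl, fun _ => rfl, fun _ t ht => f.2 t ht⟩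

theorem basedHtpy_symm {f g : BasedLoop n X x} (h : BasedHtpy f g) : BasedHtpy g f := by
  obtain ⟨H, h0, h1, hb⟩ := h
  refine ⟨H.comp ⟨fun p => (p.1, unitInterval.symm p.2),
      continuous_fst.prodMk (continuous_symm.comp continuous_snd)⟩,
    fun t => by simp [h1 t], fun t => by simp [h0 t], fun s t ht => by simp [hb _ t ht]⟩

theorem basedHtpy_trans {f g h : BasedLoop n X x}
    (hfg : BasedHtpy f g) (hgh : BasedHtpy g h) : BasedHtpy f h := by
  obtain ⟨H1, a0, a1, ab⟩ := hfg
  obtain ⟨H2, b0, b1, bb⟩ := hgh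
  let sw : C(unitInterval × Cb n, Cb n × unitInterval) :=
    ⟨fun p => (p.2, p.1), continuous_snd.prodMk continuous_fst⟩
  let F1 : ContinuousMap.Homotopy f.1 g.1 :=
    { toContinuousMap := H1.comp sw
      map_zero_left := fun t => a0 t
      map_one_left := fun t => a1 t }
  let F2 : ContinuousMap.Homotopy g.1 h.1 :=
    { toContinuousMap := H2.comp sw
      map_zero_left := fun t => b0 t
      map_one_left := fun t => b1 t }
  let T := F1.trans F2
  refine ⟨T.toContinuousMap.comp ⟨fun p => (p.2, p.1), continuous_snd.prodMk continuous_fst⟩,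
    fun t => ?_, fun t => ?_, fun s t ht => ?_⟩
  · exact T.apply_zero t
  · exact T.apply_one t
  · show T (s, t) = x
    rw [ContinuousMap.Homotopy.trans_apply]
    split
    · exact ab _ t ht
    · exact bb _ t ht

theorem basedHtpy_equivalence : Equivalence (@BasedHtpy n X _ x) :=
  ⟨basedHtpy_refl, basedHtpy_symm, basedHtpy_trans⟩

end Stmt9Aux

namespace Stmt9Aux

variable {E : Type*} [TopologicalSpace E]

/-- Restriction of a relative map to the bottom free face of the cube. -/
def res (F : Set E) (x₀ : F) {n : ℕ} (G : RelLoop (n + 1) E F ↑x₀) :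
    BasedLoop n (↥F) x₀ :=
  ⟨⟨fun t => ⟨G.1 (Fin.snoc t 0), G.2.1 _ (snoc_zero_mem_boundary t)⟩,
    (G.1.continuous.comp
      (continuous_snoc.comp (continuous_id.prodMk continuous_const))).subtype_mk _⟩,
    fun t ht => Subtype.ext (G.2.2 _ (snoc_mem_Jset_of_boundary ht 0))⟩

theorem res_descends (F : Set E) (x₀ : F) {n : ℕ} {G₀ G₁ : RelLoop (n + 1) E F ↑x₀}
    (h : RelHtpy G₀ G₁) : BasedHtpy (res F x₀ G₀) (res F x₀ G₁) := by
  obtain ⟨H, h0, h1, hb⟩ := h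
  refine ⟨⟨fun p => ⟨H (Fin.snoc p.1 0, p.2), (hb p.2).1 _ (snoc_zero_mem_boundary p.1)⟩,
    Continuous.subtype_mk (H.continuous.comp
      ((continuous_snoc.comp (continuous_fst.prodMk continuous_const)).prodMk
        continuous_snd)) _⟩,
    fun t => Subtype.ext (h0 _), fun t => Subtype.ext (h1 _),
    fun s t ht => Subtype.ext ((hb s).2 _ (snoc_mem_Jset_of_boundary ht 0))⟩

theorem fiber_equiv_rel [ContractibleSpace E] (F : Set E) (x₀ : F) (n : ℕ) :
    ∃ Φ : RelPi (n + 1) E F ↑x₀ → PiGrp n (↥F) x₀, Function.Bijective Φ := by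
  classical
  refine ⟨Quot.lift (fun G => Quot.mk _ (res F x₀ G))
    (fun a b h => Quot.sound (res_descends F x₀ h)), ?_, ?_⟩
  · -- injectivity
    intro a b
    induction a using Quot.ind with | _ G₀ => ?_
    induction b using Quot.ind with | _ G₁ => ?_
    intro hab
    have hK : BasedHtpy (res F x₀ G₀) (res F x₀ G₁) :=
      (basedHtpy_equivalence.eqvGen_iff).mp (Quot.eqvGen_exact hab)
    obtain ⟨K, hK0, hK1, hKb⟩ := hK
    apply Quot.sound
    -- names for distinguished indices in `Fin (n + 2)`
    set sIdx : Fin (n + 2) := (Fin.last n).castSucc with hsIdx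
    set L2 : Fin (n + 2) := Fin.last (n + 1) with hL2
    set e2 : Fin n → Fin (n + 2) := fun i => i.castSucc.castSucc with he2
    set front : Cb (n + 2) → Cb n := fun w i => w (e2 i) with hfront
    set D2 : Cb (n + 2) → E := fun w =>
      if (w sIdx : ℝ) = 0 then (K (front w, w L2) : E)
      else if (w L2 : ℝ) = 0 then G₀.1 (Fin.init w)
      else if (w L2 : ℝ) = 1 then G₁.1 (Fin.init w)
      else ↑x₀ with hD2
    -- fact A : reassembling the front of the cube
    have factA : ∀ w : Cb (n + 2), (w sIdx : ℝ) = 0 →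
        (Fin.snoc (front w) 0 : Cb (n + 1)) = Fin.init w := by
      intro w hw
      funext j
      induction j using Fin.lastCases with
      | last =>
        rw [Fin.snoc_last]
        exact (Subtype.ext hw).symm
      | cast i => rw [Fin.snoc_castSucc]; rfl
    -- fact B : value of D2 on the face τ = 0
    have factB : ∀ w : Cb (n + 2), (w L2 : ℝ) = 0 → D2 w = G₀.1 (Fin.init w) := by
      intro w hw
      simp only [hD2]
      by_cases h : (w sIdx : ℝ) = 0
      · rw [if_pos h]
        have hwl : w L2 = 0 := Subtype.ext hw
        rw [hwl, hK0]
        show (G₀.1 (Fin.snoc (front w) (0 : unitInterval) : Cb (n + 1)) : E) = _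
        rw [factA w h]
      · rw [if_neg h, if_pos hw]
    -- fact C : value of D2 on the face τ = 1
    have factC : ∀ w : Cb (n + 2), (w L2 : ℝ) = 1 → D2 w = G₁.1 (Fin.init w) := by
      intro w hw
      simp only [hD2]
      by_cases h : (w sIdx : ℝ) = 0
      · rw [if_pos h]
        have hwl : w L2 = 1 := Subtype.ext hw
        rw [hwl, hK1]
        show (G₁.1 (Fin.snoc (front w) (0 : unitInterval) : Cb (n + 1)) : E) = _
        rw [factA w h]
      · rw [if_neg h, if_neg (by rw [hw]; norm_num), if_pos hw]
    -- fact D : D2 is the basepoint whenever `init w` lies in `J`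
    have factD : ∀ w : Cb (n + 2), Fin.init w ∈ Jset (n + 1) → D2 w = ↑x₀ := by
      intro w hw
      simp only [hD2]
      by_cases h : (w sIdx : ℝ) = 0
      · rw [if_pos h]
        rcases hw with ⟨i, hi, hv⟩ | ⟨i, hi, hv⟩
        · have hlt : (i : ℕ) < n := by omega
          have hmem : front w ∈ cbBoundary n := by
            refine ⟨⟨(i : ℕ), hlt⟩, ?_⟩
            have hcast : ((⟨(i : ℕ), hlt⟩ : Fin n).castSucc) = i := by
              apply Fin.ext; simp
            have : front w ⟨(i : ℕ), hlt⟩ = Fin.init w i := by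
              show w (e2 ⟨(i : ℕ), hlt⟩) = w i.castSucc
              congr 1
            rw [this]
            exact hv
          rw [hKb _ _ hmem]
        · exfalso
          have hlast : i = Fin.last n := by apply Fin.ext; simpa using hi
          rw [hlast] at hv
          have : (w sIdx : ℝ) = 1 := by
            rw [show w sIdx = 1 from hv]
            simp
          rw [this] at h
          norm_num at h
      · rw [if_neg h]
        by_cases h0 : (w L2 : ℝ) = 0
        · rw [if_pos h0]
          exact G₀.2.2 _ hw
        · rw [if_neg h0]
          by_cases h1 : (w L2 : ℝ) = 1
          · rw [if_pos h1]
            exact G₁.2.2 _ hw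
          · rw [if_neg h1]
    -- continuity of D2 on the boundary of the (n+2)-cube
    have hcontK : Continuous (fun w : Cb (n + 2) => (K (front w, w L2) : E)) := by
      apply continuous_subtype_val.comp
      exact K.continuous.comp ((continuous_pi fun i => continuous_apply (e2 i)).prodMk
        (continuous_apply L2))
    have hcoord : ∀ j : Fin (n + 2), Continuous (fun w : Cb (n + 2) => (w j : ℝ)) :=
      fun j => continuous_subtype_val.comp (continuous_apply j)
    have hSa : IsClosed {w : Cb (n + 2) | (w sIdx : ℝ) = 0} :=
      isClosed_eq (hcoord sIdx) continuous_const
    have hSb : IsClosed {w : Cb (n + 2) | (w L2 : ℝ) = 0} :=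
      isClosed_eq (hcoord L2) continuous_const
    have hSc : IsClosed {w : Cb (n + 2) | (w L2 : ℝ) = 1} :=
      isClosed_eq (hcoord L2) continuous_const
    have hSd : IsClosed {w : Cb (n + 2) | Fin.init w ∈ Jset (n + 1)} :=
      (isClosed_Jset (n + 1)).preimage continuous_init
    have hcoA : ContinuousOn D2 {w : Cb (n + 2) | (w sIdx : ℝ) = 0} := by
      apply hcontK.continuousOn.congr
      intro w hw
      simp only [hD2]
      exact if_pos hw
    have hcoB : ContinuousOn D2 {w : Cb (n + 2) | (w L2 : ℝ) = 0} := by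
      apply ((G₀.1.continuous.comp continuous_init).continuousOn).congr
      intro w hw
      exact factB w hw
    have hcoC : ContinuousOn D2 {w : Cb (n + 2) | (w L2 : ℝ) = 1} := by
      apply ((G₁.1.continuous.comp continuous_init).continuousOn).congr
      intro w hw
      exact factC w hw
    have hcoD : ContinuousOn D2 {w : Cb (n + 2) | Fin.init w ∈ Jset (n + 1)} := by
      apply continuousOn_const.congr
      intro w hw
      exact factD w hw
    have hcover : cbBoundary (n + 2) ⊆
        ({w : Cb (n + 2) | (w sIdx : ℝ) = 0} ∪ {w : Cb (n + 2) | (w L2 : ℝ) = 0}) ∪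
        ({w : Cb (n + 2) | (w L2 : ℝ) = 1} ∪
          {w : Cb (n + 2) | Fin.init w ∈ Jset (n + 1)}) := by
      rintro w ⟨i, hi⟩
      induction i using Fin.lastCases with
      | last =>
        rcases hi with h0 | h1
        · exact Or.inl (Or.inr (by simp [hL2, h0]))
        · exact Or.inr (Or.inl (by simp [hL2, h1]))
      | cast j =>
        induction j using Fin.lastCases with
        | last =>
          rcases hi with h0 | h1
          · exact Or.inl (Or.inl (by simp [hsIdx, h0]))
          · refine Or.inr (Or.inr (Or.inr ⟨Fin.last n, by simp, ?_⟩))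
            show w ((Fin.last n).castSucc) = 1
            exact h1
        | cast i' =>
          refine Or.inr (Or.inr (Or.inl ⟨i'.castSucc, by simpa using i'.isLt, ?_⟩))
          show w (i'.castSucc.castSucc) = 0 ∨ w (i'.castSucc.castSucc) = 1
          exact hi
    have hcoOn : ContinuousOn D2 (cbBoundary (n + 2)) := by
      apply ContinuousOn.mono _ hcover
      exact pasteCO (hSa.union hSb) (hSc.union hSd)
        (pasteCO hSa hSb hcoA hcoB) (pasteCO hSc hSd hcoC hcoD)
    obtain ⟨Gbig, hGbig⟩ := coneExt D2 hcoOn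
    -- snoc facts
    have hsnoc_last : ∀ (t : Cb (n + 1)) (τ : unitInterval),
        (Fin.snoc t τ : Cb (n + 2)) L2 = τ := fun t τ => by simp [hL2]
    have hsnoc_s : ∀ (t : Cb (n + 1)) (τ : unitInterval),
        (Fin.snoc t τ : Cb (n + 2)) sIdx = t (Fin.last n) := fun t τ => by
      show (Fin.snoc t τ : Cb (n + 2)) ((Fin.last n).castSucc) = _
      rw [Fin.snoc_castSucc]
    have hmembd : ∀ (t : Cb (n + 1)) (τ : unitInterval), t ∈ cbBoundary (n + 1) →
        (Fin.snoc t τ : Cb (n + 2)) ∈ cbBoundary (n + 2) := by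
      rintro t τ ⟨i, hi⟩
      exact ⟨i.castSucc, by rwa [Fin.snoc_castSucc]⟩
    refine ⟨Gbig.comp ⟨fun p => Fin.snoc p.1 p.2, continuous_snoc⟩,
      fun t => ?_, fun t => ?_, fun τ => ⟨fun t ht => ?_, fun t ht => ?_⟩⟩
    · show Gbig (Fin.snoc t 0) = G₀.1 t
      have hbd : (Fin.snoc t (0 : unitInterval) : Cb (n + 2)) ∈ cbBoundary (n + 2) :=
        ⟨L2, Or.inl (by rw [hsnoc_last])⟩
      rw [hGbig _ hbd, factB _ (by rw [hsnoc_last]; norm_num), Fin.init_snoc]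
    · show Gbig (Fin.snoc t 1) = G₁.1 t
      have hbd : (Fin.snoc t (1 : unitInterval) : Cb (n + 2)) ∈ cbBoundary (n + 2) :=
        ⟨L2, Or.inr (by rw [hsnoc_last])⟩
      rw [hGbig _ hbd, factC _ (by rw [hsnoc_last]; norm_num), Fin.init_snoc]
    · -- boundary goes into F
      show Gbig (Fin.snoc t τ) ∈ F
      rw [hGbig _ (hmembd t τ ht)]
      simp only [hD2]
      by_cases h : ((Fin.snoc t τ : Cb (n + 2)) sIdx : ℝ) = 0
      · rw [if_pos h]
        exact (K (front (Fin.snoc t τ), (Fin.snoc t τ : Cb (n + 2)) L2)).2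
      · rw [if_neg h]
        by_cases h0 : ((Fin.snoc t τ : Cb (n + 2)) L2 : ℝ) = 0
        · rw [if_pos h0, Fin.init_snoc]
          exact G₀.2.1 t ht
        · rw [if_neg h0]
          by_cases h1 : ((Fin.snoc t τ : Cb (n + 2)) L2 : ℝ) = 1
          · rw [if_pos h1, Fin.init_snoc]
            exact G₁.2.1 t ht
          · rw [if_neg h1]
            exact x₀.2
    · -- J goes to the basepoint
      show Gbig (Fin.snoc t τ) = ↑x₀
      rw [hGbig _ (hmembd t τ (Jset_subset_cbBoundary _ ht))]
      apply factD
      rwa [Fin.init_snoc]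
  · -- surjectivity
    intro fq
    induction fq using Quot.ind with | _ f => ?_
    set D1 : Cb (n + 1) → E := fun t =>
      if (t (Fin.last n) : ℝ) = 0 then (f.1 (Fin.init t) : E) else (x₀ : E) with hD1
    have hD1J : ∀ t ∈ Jset (n + 1), D1 t = ↑x₀ := by
      intro t ht
      simp only [hD1]
      by_cases h : (t (Fin.last n) : ℝ) = 0
      · rw [if_pos h]
        rcases ht with ⟨i, hi, hv⟩ | ⟨i, hi, hv⟩
        · have hlt : (i : ℕ) < n := by omega
          have hmem : Fin.init t ∈ cbBoundary n := by
            refine ⟨⟨(i : ℕ), hlt⟩, ?_⟩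
            have : Fin.init t ⟨(i : ℕ), hlt⟩ = t i := by
              show t ((⟨(i : ℕ), hlt⟩ : Fin n).castSucc) = t i
              congr 1
            rw [this]
            exact hv
          rw [f.2 _ hmem]
        · exfalso
          have hlast : i = Fin.last n := by apply Fin.ext; simpa using hi
          rw [hlast] at hv
          rw [hv] at h
          norm_num at h
      · rw [if_neg h]
    have hS1 : IsClosed {t : Cb (n + 1) | (t (Fin.last n) : ℝ) = 0} :=
      isClosed_eq (continuous_subtype_val.comp (continuous_apply _)) continuous_const
    have hco1 : ContinuousOn D1 {t : Cb (n + 1) | (t (Fin.last n) : ℝ) = 0} := by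
      apply ContinuousOn.congr
        (f := fun t : Cb (n + 1) => (f.1 (Fin.init t) : E))
      · exact (continuous_subtype_val.comp (f.1.continuous.comp continuous_init)).continuousOn
      · intro t ht
        simp only [hD1]
        exact if_pos ht
    have hco2 : ContinuousOn D1 (Jset (n + 1)) := continuousOn_const.congr hD1J
    have hcover : cbBoundary (n + 1) ⊆
        {t : Cb (n + 1) | (t (Fin.last n) : ℝ) = 0} ∪ Jset (n + 1) := by
      rintro t ⟨i, hi⟩
      induction i using Fin.lastCases with
      | last =>
        rcases hi with h0 | h1
        · exact Or.inl (by simp [h0])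
        · exact Or.inr (Or.inr ⟨Fin.last n, by simp, h1⟩)
      | cast j =>
        exact Or.inr (Or.inl ⟨j.castSucc, by simpa using j.isLt, hi⟩)
    have hcoOn : ContinuousOn D1 (cbBoundary (n + 1)) :=
      (pasteCO hS1 (isClosed_Jset (n + 1)) hco1 hco2).mono hcover
    obtain ⟨Gc, hGc⟩ := coneExt D1 hcoOn
    have hGmem : ∀ t ∈ cbBoundary (n + 1), Gc t ∈ F := by
      intro t ht
      rw [hGc t ht]
      simp only [hD1]
      by_cases h : (t (Fin.last n) : ℝ) = 0
      · rw [if_pos h]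
        exact (f.1 (Fin.init t)).2
      · rw [if_neg h]
        exact x₀.2
    have hGJ : ∀ t ∈ Jset (n + 1), Gc t = ↑x₀ := by
      intro t ht
      rw [hGc t (Jset_subset_cbBoundary _ ht)]
      exact hD1J t ht
    set GG : RelLoop (n + 1) E F ↑x₀ := ⟨Gc, hGmem, hGJ⟩ with hGG
    refine ⟨Quot.mk _ GG, ?_⟩
    show Quot.mk _ (res F x₀ GG) = Quot.mk _ f
    have hres : res F x₀ GG = f := by
      apply Subtype.ext
      ext t
      show (Gc (Fin.snoc t (0 : unitInterval) : Cb (n + 1)) : E) = ↑(f.1 t)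
      rw [hGc _ (snoc_zero_mem_boundary t)]
      simp only [hD1]
      have hcond : ((Fin.snoc t (0 : unitInterval) : Cb (n + 1)) (Fin.last n) : ℝ) = 0 := by
        simp
      rw [if_pos hcond]
      congr 1
      rw [Fin.init_snoc]
    rw [hres]

end Stmt9Aux

/-- If `q : E → B` is a quasifibration with (weakly) contractible total space `E` over a
path-connected base `B` with basepoint `b`, then the fiber `F = q⁻¹(b)` is weakly
homotopy equivalent to the loop space of `B`: `π_n(F) ≅ π_{n+1}(B)` for all `n ≥ 0`
(and all basepoints of the fiber). -/

theorem stmt9 {E B : Type*} [TopologicalSpace E] [TopologicalSpace B]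
    (q : C(E, B)) (hq : IsQuasifibration q)
    [ContractibleSpace E] [PathConnectedSpace B] (b : B) :
    ∀ (x₀ : ↥(q ⁻¹' ({b} : Set B))) (n : ℕ),
      Nonempty (PiGrp n (↥(q ⁻¹' ({b} : Set B))) x₀ ≃ PiGrp (n + 1) B b) := by
  intro x₀ n
  obtain ⟨Φ, hΦ⟩ := Stmt9Aux.fiber_equiv_rel (q ⁻¹' ({b} : Set B)) x₀ n
  exact ⟨(Equiv.ofBijective Φ hΦ).symm.trans
    (Equiv.ofBijective _ (hq b ↑x₀ x₀.2 (n + 1) (by omega)))⟩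
end

section
/- Let G be a self-adjoint operator with finite-dimensional domain D in a Hilbert space, with spectral decomposition G = Σ_λ λ π_{G_λ}, and suppose an operator f with f² = 1 acts on ker(G), splitting it as ker(G)⁺ ⊕ ker(G)⁻ (the ±1 eigenspaces of f). Then the family H_t(G) := (1/(1−t)) G + (t/(1−t)) π_{ker G} f, for t ∈ [0,1), is a path of self-adjoint operators on D starting at G whose nonzero eigenvalues are λ/(1−t) (λ ≠ 0 an eigenvalue of G) together with ±t/(1−t) on ker(G)^±; in particular every eigenvalue of H_t(G) tends to ±∞ as t → 1. -/
open Filter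

/-- The path `H_t(G) = (1/(1-t))·G + (t/(1-t))·π_{ker G}·f`. -/
noncomputable def pathOp {H : Type*} [NormedAddCommGroup H] [InnerProductSpace ℂ H]
    [FiniteDimensional ℂ H] (G f : Module.End ℂ H) (t : ℝ) : Module.End ℂ H :=
  (((1 / (1 - t) : ℝ) : ℂ) • G) +
    (((t / (1 - t) : ℝ) : ℂ) •
      (((LinearMap.ker G).subtype ∘ₗ (Submodule.orthogonalProjectionOnto (LinearMap.ker G)).toLinearMap) ∘ₗ f))

/-- For a self-adjoint operator `G` on a finite-dimensional space and a self-adjoint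
involution `f` of `ker G` commuting with the orthogonal projection `π_{ker G}`, the family
`H_t(G) = (1/(1-t))G + (t/(1-t))π_{ker G} f`, `t ∈ [0,1)`, is a path of self-adjoint
operators starting at `G`, whose nonzero eigenvalues are `λ/(1-t)` for `λ ≠ 0` an
eigenvalue of `G`, together with `±t/(1-t)` on `ker(G)^±`; every eigenvalue tends to
`±∞` as `t → 1`. -/
theorem stmt18 {H : Type*} [NormedAddCommGroup H] [InnerProductSpace ℂ H]
    [FiniteDimensional ℂ H]
    (G f : Module.End ℂ H) (hGsym : G.IsSymmetric) (hfsym : f.IsSymmetric)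
    (hf2 : ∀ x ∈ LinearMap.ker G, f (f x) = x)
    (hfker : ∀ x ∈ LinearMap.ker G, f x ∈ LinearMap.ker G)
    (hcomm : (((LinearMap.ker G).subtype ∘ₗ (Submodule.orthogonalProjectionOnto (LinearMap.ker G)).toLinearMap)
        ∘ₗ f) = f ∘ₗ ((LinearMap.ker G).subtype ∘ₗ (Submodule.orthogonalProjectionOnto (LinearMap.ker G)).toLinearMap)) :
    (pathOp G f 0 = G) ∧
    (∀ t : ℝ, 0 ≤ t → t < 1 →
      ((pathOp G f t).IsSymmetric ∧
      (∀ (r : ℝ) (x : H), x ≠ 0 → r ≠ 0 → G x = (r : ℂ) • x →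
        pathOp G f t x = (((r / (1 - t) : ℝ)) : ℂ) • x) ∧
      (∀ x ∈ LinearMap.ker G, x ≠ 0 → f x = x →
        pathOp G f t x = (((t / (1 - t) : ℝ)) : ℂ) • x) ∧
      (∀ x ∈ LinearMap.ker G, x ≠ 0 → f x = -x →
        pathOp G f t x = -((((t / (1 - t) : ℝ)) : ℂ) • x)))) ∧
    Tendsto (fun t : ℝ => t / (1 - t)) (nhdsWithin 1 (Set.Iio 1)) atTop ∧
    (∀ r : ℝ, r ≠ 0 →
      Tendsto (fun t : ℝ => |r| / (1 - t)) (nhdsWithin 1 (Set.Iio 1)) atTop) := by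
  set K := LinearMap.ker G with hK
  set P : Module.End ℂ H := K.subtype ∘ₗ (Submodule.orthogonalProjectionOnto K).toLinearMap with hP
  have hPsym : P.IsSymmetric := K.starProjection_isSymmetric
  have hcomm' : ∀ z : H, P (f z) = f (P z) := fun z => LinearMap.congr_fun hcomm z
  refine ⟨?_, ?_, ?_, ?_⟩
  · -- t = 0
    ext x
    simp [pathOp]
  · intro t _ht0 ht1
    have hone : (1 : ℝ) - t ≠ 0 := by linarith
    refine ⟨?_, ?_, ?_, ?_⟩
    · -- symmetric
      intro x y
      have hPf : ∀ x y : H, (inner ℂ ((P ∘ₗ f) x) y : ℂ) = inner ℂ x ((P ∘ₗ f) y) := by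
        intro x y
        calc (inner ℂ ((P ∘ₗ f) x) y : ℂ) = inner ℂ (f (P x)) y := by rw [LinearMap.comp_apply, hcomm' x]
          _ = inner ℂ (P x) (f y) := hfsym _ _
          _ = inner ℂ x (P (f y)) := hPsym _ _
          _ = inner ℂ x ((P ∘ₗ f) y) := rfl
      simp only [pathOp, LinearMap.add_apply, LinearMap.smul_apply, inner_add_left,
        inner_add_right, inner_smul_left, inner_smul_right, Complex.conj_ofReal]
      rw [hGsym x y, hPf x y]
    · -- nonzero eigenvalues
      intro r x _hx hr hGx
      have hxorth : x ∈ Kᗮ := by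
        rw [Submodule.mem_orthogonal]
        intro u hu
        have h2 : inner ℂ (G x) u = (0 : ℂ) := by
          rw [hGsym x u]
          have : G u = 0 := hu
          rw [this, inner_zero_right]
        have h3 : (r : ℂ) * inner ℂ x u = 0 := by
          rw [← h2, hGx, inner_smul_left, Complex.conj_ofReal]
        have : inner ℂ x u = (0 : ℂ) :=
          (mul_eq_zero.1 h3).resolve_left (Complex.ofReal_ne_zero.2 hr)
        rw [← inner_conj_symm, this, map_zero]
      have hPx : P x = 0 := by
        have := Submodule.orthogonalProjectionOnto_apply_of_mem_orthogonal (K := K) hxorth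
        simp [hP, this]
      have hPfx : P (f x) = 0 := by rw [hcomm' x, hPx, map_zero]
      show (((1 / (1 - t) : ℝ) : ℂ) • G) x + (((t / (1 - t) : ℝ) : ℂ) • (P ∘ₗ f)) x = _
      rw [LinearMap.smul_apply, LinearMap.smul_apply, LinearMap.comp_apply, hPfx, smul_zero,
        add_zero, hGx, smul_smul]
      congr 1
      push_cast
      field_simp
    · -- +1 eigenspace of f on ker G
      intro x hx _hx0 hfx
      have hGx : G x = 0 := hx
      have hPx : P x = x := by
        simpa [hP] using K.starProjection_eq_self_iff.2 hx
      show (((1 / (1 - t) : ℝ) : ℂ) • G) x + (((t / (1 - t) : ℝ) : ℂ) • (P ∘ₗ f)) x = _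
      rw [LinearMap.smul_apply, LinearMap.smul_apply, LinearMap.comp_apply, hfx, hPx, hGx,
        smul_zero, zero_add]
    · -- -1 eigenspace of f on ker G
      intro x hx _hx0 hfx
      have hGx : G x = 0 := hx
      have hPx : P x = x := by
        simpa [hP] using K.starProjection_eq_self_iff.2 hx
      show (((1 / (1 - t) : ℝ) : ℂ) • G) x + (((t / (1 - t) : ℝ) : ℂ) • (P ∘ₗ f)) x = _
      rw [LinearMap.smul_apply, LinearMap.smul_apply, LinearMap.comp_apply, hfx, map_neg, hPx,
        hGx, smul_zero, zero_add, smul_neg]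
  · -- t/(1-t) → ∞
    have h1 : Tendsto (fun t : ℝ => (1 - t)) (nhdsWithin 1 (Set.Iio 1)) (nhdsWithin 0 (Set.Ioi 0)) := by
      apply tendsto_nhdsWithin_of_tendsto_nhds_of_eventually_within
      · have : Tendsto (fun t : ℝ => 1 - t) (nhds 1) (nhds (1 - 1)) :=
          (tendsto_const_nhds.sub tendsto_id)
        simpa using this.mono_left nhdsWithin_le_nhds
      · filter_upwards [self_mem_nhdsWithin] with x hx
        simp only [Set.mem_Iio] at hx
        simp only [Set.mem_Ioi]
        linarith
    have h2 : Tendsto (fun t : ℝ => (1 - t)⁻¹) (nhdsWithin 1 (Set.Iio 1)) atTop :=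
      tendsto_inv_nhdsGT_zero.comp h1
    have h3 : Tendsto (fun t : ℝ => t) (nhdsWithin 1 (Set.Iio 1)) (nhds 1) :=
      tendsto_id.mono_left nhdsWithin_le_nhds
    have := Tendsto.pos_mul_atTop (by norm_num : (0:ℝ) < 1) h3 h2
    simpa [div_eq_mul_inv] using this
  · intro r hr
    have h1 : Tendsto (fun t : ℝ => (1 - t)) (nhdsWithin 1 (Set.Iio 1)) (nhdsWithin 0 (Set.Ioi 0)) := by
      apply tendsto_nhdsWithin_of_tendsto_nhds_of_eventually_within
      · have : Tendsto (fun t : ℝ => 1 - t) (nhds 1) (nhds (1 - 1)) :=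
          (tendsto_const_nhds.sub tendsto_id)
        simpa using this.mono_left nhdsWithin_le_nhds
      · filter_upwards [self_mem_nhdsWithin] with x hx
        simp only [Set.mem_Iio] at hx
        simp only [Set.mem_Ioi]
        linarith
    have h2 : Tendsto (fun t : ℝ => (1 - t)⁻¹) (nhdsWithin 1 (Set.Iio 1)) atTop :=
      tendsto_inv_nhdsGT_zero.comp h1
    have := Tendsto.const_mul_atTop (abs_pos.2 hr) h2
    simpa [div_eq_mul_inv] using this
end
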